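/- arXiv:1908.05610 — 2 statements merged into one kernel-verified Lean document; each statement's English description precedes it below -/
import Mathlib

section
/- A closed curve in ℝ² that has winding number 1 around each of four points placed at the vertices of a square of side 2, and stays at distance ≥ 1 from all four vertices, has length at least 2π + 8. -/
open Set Complex
open intervalIntegral MeasureTheory

/-- The curve `γ`, restricted to `[0,1]`, winds once (counterclockwise) around `p`. -/
def WindsOnce (γ : ℝ → ℂ) (p : ℂ) : Prop :=
  ∃ θ r : ℝ → ℝ, ContinuousOn θ (Icc 0 1) ∧ ContinuousOn r (Icc 0 1) ∧
    (∀ t ∈ Icc (0:ℝ) 1, 0 < r t ∧ γ t - p = r t * Complex.exp (θ t * Complex.I)) ∧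
    θ 1 = θ 0 + 2 * Real.pi

/-- The vertices of a square of side length `2` in `ℝ² = ℂ`. -/
noncomputable def squareVertices : Fin 4 → ℂ := ![0, 2, 2 + 2 * Complex.I, 2 * Complex.I]


lemma tele (g : ℕ → ℝ) {i j : ℕ} (h : i ≤ j) :
    |g j - g i| ≤ ∑ k ∈ Finset.Ico i j, |g (k+1) - g k| := by
  induction j, h using Nat.le_induction with
  | base => simp
  | succ n hn ih =>
    rw [Finset.sum_Ico_succ_top (by omega)]
    calc |g (n+1) - g i| ≤ |g (n+1) - g n| + |g n - g i| := abs_sub_le _ _ _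
      _ ≤ _ := by linarith [ih]

lemma gridBound (f : ℝ → ℝ) (hf : f 0 = f 1) (N i j : ℕ) (hN : 1 ≤ N) (hij : i ≤ j) (hj : j ≤ N) :
    2 * |f (i/N) - f (j/N)| ≤ ∑ k ∈ Finset.range N, |f ((k+1)/N) - f (k/N)| := by
  have hN0 : (N:ℝ) ≠ 0 := Nat.cast_ne_zero.mpr (by omega)
  have h1 : (N:ℝ)/N = 1 := div_self hN0
  set g : ℕ → ℝ := fun k => f (k/N) with hg
  have hgN : g N = f 0 := by rw [hg]; simp only [h1, hf]
  have hg0 : g 0 = f 0 := by rw [hg]; norm_num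
  have e1 : |g i - g 0| ≤ ∑ k ∈ Finset.Ico 0 i, |g (k+1) - g k| := tele g (Nat.zero_le i)
  have e2 : |g j - g i| ≤ ∑ k ∈ Finset.Ico i j, |g (k+1) - g k| := tele g hij
  have e3 : |g N - g j| ≤ ∑ k ∈ Finset.Ico j N, |g (k+1) - g k| := tele g hj
  have hsum : ∑ k ∈ Finset.range N, |g (k+1) - g k|
      = (∑ k ∈ Finset.Ico 0 i, |g (k+1) - g k|) + (∑ k ∈ Finset.Ico i j, |g (k+1) - g k|)
        + (∑ k ∈ Finset.Ico j N, |g (k+1) - g k|) := by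
    rw [Finset.sum_Ico_consecutive _ (Nat.zero_le i) hij, Finset.sum_Ico_consecutive _ (Nat.zero_le j) hj]
    rw [Finset.range_eq_Ico]
  have tri : |g i - g j| ≤ |g i - g 0| + |g N - g j| := by
    calc |g i - g j| ≤ |g i - g 0| + |g 0 - g j| := abs_sub_le _ _ _
      _ = |g i - g 0| + |g N - g j| := by rw [hg0, hgN]
  have heq : ∑ k ∈ Finset.range N, |f ((k+1)/N) - f (k/N)|
      = ∑ k ∈ Finset.range N, |g (k+1) - g k| := by
    apply Finset.sum_congr rfl
    intro k _
    rw [hg]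
    push_cast
    ring_nf
  have habs : |f (i/N) - f (j/N)| = |g i - g j| := rfl
  rw [habs, heq, hsum]
  have h2 : |g i - g j| ≤ |g j - g i| := le_of_eq (abs_sub_comm _ _)
  linarith [tri, e1, e2, e3]


lemma windFar (γ : ℝ → ℂ) (p : ℂ) (hw : WindsOnce γ p) (hclosed : γ 0 = γ 1)
    (hd : ∀ t ∈ Icc (0:ℝ) 1, 1 ≤ dist (γ t) p) (φ ε : ℝ) (hε : 0 < ε) (hε1 : ε < 1) :
    ∃ t ∈ Icc (0:ℝ) 1, 1 - ε ≤ ((γ t - p) * Complex.exp (-(φ:ℂ) * I)).re := by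
  obtain ⟨θ, r, hθc, hrc, hpol, hθ1⟩ := hw
  by_contra hcon
  push_neg at hcon
  set s : ℝ := 1 - ε with hs
  have hs0 : 0 < s := by linarith
  have hs1 : s < 1 := by linarith
  -- r t ≥ 1 on Icc
  have hr1 : ∀ t ∈ Icc (0:ℝ) 1, 1 ≤ r t := by
    intro t ht
    have h1 := (hpol t ht).1
    have h2 := (hpol t ht).2
    have : dist (γ t) p = r t := by
      rw [Complex.dist_eq, h2, norm_mul, Complex.norm_exp]
      simp [h1.le, abs_of_pos h1]
    rw [← this]; exact hd t ht
  set c : ℝ → ℂ := fun t => (r t : ℂ) - s * Complex.exp ((φ:ℂ) * I) * Complex.exp (-(θ t : ℂ) * I) with hc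
  have hcre : ∀ t ∈ Icc (0:ℝ) 1, 0 < (c t).re := by
    intro t ht
    have : ‖(s:ℂ) * Complex.exp ((φ:ℂ) * I) * Complex.exp (-(θ t : ℂ) * I)‖ = s := by
      rw [norm_mul, norm_mul, Complex.norm_exp, Complex.norm_exp]
      simp [abs_of_pos hs0]
    have hre : ((s:ℂ) * Complex.exp ((φ:ℂ) * I) * Complex.exp (-(θ t : ℂ) * I)).re ≤ s := by
      calc _ ≤ ‖_‖ := Complex.re_le_norm _
        _ = s := this
    have : (c t).re = r t - ((s:ℂ) * Complex.exp ((φ:ℂ) * I) * Complex.exp (-(θ t : ℂ) * I)).re := by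
      simp [hc]
    rw [this]
    have := hr1 t ht
    linarith
  have hcne : ∀ t ∈ Icc (0:ℝ) 1, c t ≠ 0 := by
    intro t ht h0
    have := hcre t ht
    rw [h0] at this; simp at this
  -- the angle function
  set ψ : ℝ → ℝ := fun t => θ t - φ + Complex.arg (c t) with hψ
  have hψc : ContinuousOn ψ (Icc 0 1) := by
    apply ContinuousOn.add (hθc.sub continuousOn_const)
    have hcc : ContinuousOn c (Icc 0 1) := by
      apply ContinuousOn.sub (Complex.continuous_ofReal.comp_continuousOn hrc)
      apply ContinuousOn.mul continuousOn_const
      apply Complex.continuous_exp.comp_continuousOn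
      exact (Complex.continuous_ofReal.comp_continuousOn hθc).neg.mul continuousOn_const
    intro t ht
    exact (Complex.continuousAt_arg (Or.inl (hcre t ht))).comp_continuousWithinAt (hcc t ht)
  -- cos ψ < 0
  have hkey : ∀ t ∈ Icc (0:ℝ) 1, Real.cos (ψ t) < 0 := by
    intro t ht
    have hpol2 := (hpol t ht).2
    have h1 : (γ t - p) * Complex.exp (-(φ:ℂ) * I)
        = c t * Complex.exp ((θ t - φ : ℝ) * I) + s := by
      rw [hpol2, hc]
      push_cast
      rw [sub_mul, mul_assoc, mul_assoc, ← Complex.exp_add, mul_assoc, ← Complex.exp_add,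
        ← Complex.exp_add]
      ring_nf
      rw [Complex.exp_zero]
      ring
    have h2 : c t * Complex.exp ((θ t - φ : ℝ) * I)
        = (‖c t‖ : ℂ) * Complex.exp ((ψ t : ℝ) * I) := by
      conv_lhs => rw [← Complex.norm_mul_exp_arg_mul_I (c t)]
      rw [mul_assoc, ← Complex.exp_add, hψ]
      push_cast
      ring_nf
    have h3 : ((γ t - p) * Complex.exp (-(φ:ℂ) * I)).re
        = ‖c t‖ * Real.cos (ψ t) + s := by
      rw [h1, h2]
      simp [Complex.exp_ofReal_mul_I_re]
    have h4 := hcon t ht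
    rw [h3] at h4
    have habs : 0 < ‖c t‖ := by
      exact norm_pos_iff.mpr (hcne t ht)
    nlinarith
  -- ψ 1 = ψ 0 + 2π
  have hr01 : r 0 = r 1 := by
    have h0 : (0:ℝ) ∈ Icc (0:ℝ) 1 := by norm_num
    have h1 : (1:ℝ) ∈ Icc (0:ℝ) 1 := by norm_num
    have e0 := (hpol 0 h0).2
    have e1 := (hpol 1 h1).2
    rw [hclosed] at e0
    rw [e1, hθ1] at e0
    have hexp : Complex.exp ((θ 0 + 2*Real.pi : ℝ) * I) = Complex.exp ((θ 0 : ℝ) * I) := by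
      push_cast
      rw [add_mul, Complex.exp_add, Complex.exp_two_pi_mul_I, mul_one]
    rw [hexp] at e0
    have hne : Complex.exp ((θ 0 : ℝ) * I) ≠ 0 := Complex.exp_ne_zero _
    field_simp at e0
    exact_mod_cast e0.symm
  have hc01 : c 0 = c 1 := by
    rw [hc]
    simp only
    rw [hr01, hθ1]
    congr 2
    push_cast
    rw [neg_add, add_mul, Complex.exp_add]
    rw [show (-(2*(Real.pi:ℂ)) * I) = -(2*Real.pi*I) by ring, Complex.exp_neg,
      Complex.exp_two_pi_mul_I]
    simp
  have hψ1 : ψ 1 = ψ 0 + 2 * Real.pi := by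
    rw [hψ]
    simp only
    rw [hθ1, ← hc01]
    ring
  -- IVT contradiction
  set v : ℝ := 2 * Real.pi * ⌈ψ 0 / (2 * Real.pi)⌉ with hv
  have hpi : 0 < 2 * Real.pi := by positivity
  have hv0 : ψ 0 ≤ v := by
    rw [hv]
    have := Int.le_ceil (ψ 0 / (2 * Real.pi))
    calc ψ 0 = 2 * Real.pi * (ψ 0 / (2 * Real.pi)) := by field_simp
      _ ≤ _ := by
        apply mul_le_mul_of_nonneg_left this hpi.le
  have hv1 : v ≤ ψ 1 := by
    rw [hψ1, hv]
    have := Int.ceil_lt_add_one (ψ 0 / (2 * Real.pi))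
    have h2 : (2 * Real.pi) * (⌈ψ 0 / (2 * Real.pi)⌉ : ℝ) < 2 * Real.pi * (ψ 0 / (2 * Real.pi) + 1) := by
      apply mul_lt_mul_of_pos_left this hpi
    have h3 : 2 * Real.pi * (ψ 0 / (2 * Real.pi) + 1) = ψ 0 + 2 * Real.pi := by field_simp
    linarith
  have hmem : v ∈ Icc (ψ 0) (ψ 1) := ⟨hv0, hv1⟩
  obtain ⟨t, ht, htv⟩ := intermediate_value_Icc (by norm_num : (0:ℝ) ≤ 1) hψc hmem
  have hlt := hkey t ht
  rw [htv] at hlt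
  have hcv : Real.cos v = 1 := by
    rw [hv, mul_comm]
    exact_mod_cast Real.cos_int_mul_two_pi _
  linarith

noncomputable def Fdir (z : ℂ) (φ : ℝ) : ℝ := z.re * Real.cos φ + z.im * Real.sin φ

lemma Fdir_eq (z : ℂ) (φ : ℝ) : (z * Complex.exp (-(φ:ℂ) * I)).re = Fdir z φ := by
  have h : (-(φ:ℂ)) = ((-φ : ℝ) : ℂ) := by push_cast; ring
  rw [h, Complex.exp_mul_I]
  simp [Fdir, Complex.mul_re, Complex.add_re, Complex.cos_ofReal_re, Complex.sin_ofReal_re,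
    Real.cos_neg, Real.sin_neg, Complex.mul_im]

lemma Fdir_sub (z w : ℂ) (φ : ℝ) : Fdir (z - w) φ = Fdir z φ - Fdir w φ := by
  simp [Fdir]; ring

-- rational approximation
lemma ratNear (f : ℝ → ℝ) (hf : ContinuousOn f (Icc 0 1)) (t : ℝ) (ht : t ∈ Icc (0:ℝ) 1)
    (δ : ℝ) (hδ : 0 < δ) : ∃ n i : ℕ, 1 ≤ n ∧ i ≤ n ∧ |f ((i:ℝ)/(n:ℝ)) - f t| < δ := by
  have hcw : ContinuousWithinAt f (Icc 0 1) t := hf t ht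
  rw [Metric.continuousWithinAt_iff] at hcw
  obtain ⟨d, hd, hball⟩ := hcw δ hδ
  obtain ⟨ht0, ht1⟩ := ht
  have : ∃ q : ℚ, (q:ℝ) ∈ Icc (0:ℝ) 1 ∧ |(q:ℝ) - t| < d := by
    rcases le_or_gt t (1/2) with hhalf | hhalf
    · have hlt : t < min 1 (t + d) := lt_min (by linarith) (by linarith)
      obtain ⟨q, hq1, hq2⟩ := exists_rat_btwn hlt
      refine ⟨q, ⟨by linarith, le_trans hq2.le (min_le_left _ _)⟩, ?_⟩
      rw [abs_lt]
      constructor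
      · linarith
      · have := lt_of_lt_of_le hq2 (min_le_right _ _)
        linarith
    · have hlt : max 0 (t - d) < t := max_lt (by linarith) (by linarith)
      obtain ⟨q, hq1, hq2⟩ := exists_rat_btwn hlt
      refine ⟨q, ⟨le_trans (le_max_left _ _) hq1.le, by linarith⟩, ?_⟩
      rw [abs_lt]
      constructor
      · have := lt_of_le_of_lt (le_max_right (0:ℝ) (t - d)) hq1
        linarith
      · linarith
  obtain ⟨q, hqI, hqd⟩ := this
  have hq0 : 0 ≤ q := by exact_mod_cast hqI.1
  have hq1 : q ≤ 1 := by exact_mod_cast hqI.2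
  refine ⟨q.den, q.num.toNat, q.pos, ?_, ?_⟩
  · have hden : (0:ℚ) < (q.den : ℚ) := by exact_mod_cast q.pos
    have h1 : (q.num : ℚ) ≤ (q.den : ℚ) := by
      rw [← Rat.num_div_den q] at hq1
      exact (div_le_one hden).mp hq1
    have h2 : q.num ≤ (q.den : ℤ) := by exact_mod_cast h1
    omega
  · have hcast : ((q.num.toNat : ℕ) : ℝ) / (q.den : ℝ) = (q : ℝ) := by
      rw [Rat.cast_def]
      congr 1
      have h := Rat.num_nonneg.mpr hq0
      norm_cast
      omega
    rw [hcast]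
    have : (q:ℝ) ∈ Icc (0:ℝ) 1 := hqI
    calc |f (q:ℝ) - f t| = dist (f (q:ℝ)) (f t) := by rw [Real.dist_eq]
      _ < δ := hball this (by rw [Real.dist_eq]; exact hqd)

lemma Fdir_add_pi (z : ℂ) (φ : ℝ) : Fdir z (φ + Real.pi) = - Fdir z φ := by
  simp [Fdir, Real.cos_add_pi, Real.sin_add_pi]; ring

lemma vertexChoice (φ : ℝ) : ∃ k l : Fin 4,
    Fdir (squareVertices k) φ - Fdir (squareVertices l) φ
      = 2*|Real.cos φ| + 2*|Real.sin φ| := by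
  have h0 : squareVertices 0 = 0 := rfl
  have h1 : squareVertices 1 = 2 := rfl
  have h2 : squareVertices 2 = 2 + 2*Complex.I := rfl
  have h3 : squareVertices 3 = 2*Complex.I := rfl
  rcases le_or_gt 0 (Real.cos φ) with hc | hc <;> rcases le_or_gt 0 (Real.sin φ) with hs | hs
  · exact ⟨2, 0, by rw [h2, h0]; simp [Fdir, _root_.abs_of_nonneg hc, _root_.abs_of_nonneg hs]⟩
  · exact ⟨1, 3, by rw [h1, h3]; simp [Fdir, _root_.abs_of_nonneg hc, _root_.abs_of_neg hs]; ring⟩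
  · exact ⟨3, 1, by rw [h3, h1]; simp [Fdir, _root_.abs_of_neg hc, _root_.abs_of_nonneg hs]; ring⟩
  · exact ⟨0, 2, by rw [h0, h2]; simp [Fdir, _root_.abs_of_neg hc, _root_.abs_of_neg hs]; ring⟩

lemma dirBound (γ : ℝ → ℂ) (hcont : ContinuousOn γ (Icc 0 1)) (hclosed : γ 0 = γ 1)
    (hwind : ∀ i : Fin 4, WindsOnce γ (squareVertices i))
    (hdist : ∀ t ∈ Icc (0:ℝ) 1, ∀ i : Fin 4, 1 ≤ dist (γ t) (squareVertices i))
    (φ ε : ℝ) (hε : 0 < ε) :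
    ∃ n i j : ℕ, 1 ≤ n ∧ i ≤ n ∧ j ≤ n ∧
      2*|Real.cos φ| + 2*|Real.sin φ| + 2 - ε
        < Fdir (γ ((i:ℝ)/(n:ℝ))) φ - Fdir (γ ((j:ℝ)/(n:ℝ))) φ := by
  set ε' : ℝ := min (ε/8) (1/2) with hε'
  have hε'0 : 0 < ε' := lt_min (by linarith) (by norm_num)
  have hε'1 : ε' < 1 := lt_of_le_of_lt (min_le_right _ _) (by norm_num)
  have hε'ε : 4 * ε' < ε := by
    have := min_le_left (ε/8) (1/2)
    have : ε' ≤ ε/8 := this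
    linarith
  obtain ⟨k, l, hkl⟩ := vertexChoice φ
  obtain ⟨t, htI, hta⟩ := windFar γ (squareVertices k) (hwind k) hclosed
    (fun x hx => hdist x hx k) φ ε' hε'0 hε'1
  obtain ⟨u, huI, hua⟩ := windFar γ (squareVertices l) (hwind l) hclosed
    (fun x hx => hdist x hx l) (φ + Real.pi) ε' hε'0 hε'1
  rw [Fdir_eq, Fdir_sub] at hta
  rw [Fdir_eq, Fdir_sub, Fdir_add_pi, Fdir_add_pi] at hua
  -- hta : 1 - ε' ≤ Fdir (γ t) φ - Fdir (squareVertices k) φ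
  -- hua : 1 - ε' ≤ -Fdir (γ u) φ - -Fdir (squareVertices l) φ
  have hfc : ContinuousOn (fun x => Fdir (γ x) φ) (Icc 0 1) := by
    apply ContinuousOn.add
    · exact (Complex.continuous_re.comp_continuousOn hcont).mul continuousOn_const
    · exact (Complex.continuous_im.comp_continuousOn hcont).mul continuousOn_const
  obtain ⟨n₁, i₁, hn₁, hi₁, hfi⟩ := ratNear _ hfc t htI ε' hε'0
  obtain ⟨n₂, j₂, hn₂, hj₂, hfj⟩ := ratNear _ hfc u huI ε' hε'0
  refine ⟨n₁ * n₂, i₁ * n₂, j₂ * n₁, Nat.one_le_iff_ne_zero.mpr (by positivity), 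
    Nat.mul_le_mul_right _ hi₁, (by rw [Nat.mul_comm]; exact Nat.mul_le_mul_left _ hj₂), ?_⟩
  have hcast1 : ((i₁ * n₂ : ℕ) : ℝ) / ((n₁ * n₂ : ℕ) : ℝ) = (i₁ : ℝ) / (n₁ : ℝ) := by
    push_cast
    rw [mul_div_mul_right]
    exact Nat.cast_ne_zero.mpr (by omega)
  have hcast2 : ((j₂ * n₁ : ℕ) : ℝ) / ((n₁ * n₂ : ℕ) : ℝ) = (j₂ : ℝ) / (n₂ : ℝ) := by
    push_cast
    rw [mul_comm (n₁:ℝ) (n₂:ℝ), mul_div_mul_right]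
    exact Nat.cast_ne_zero.mpr (by omega)
  rw [hcast1, hcast2]
  have e1 := abs_lt.mp hfi
  have e2 := abs_lt.mp hfj
  have := hkl
  nlinarith [e1.1, e1.2, e2.1, e2.2]

lemma absCos_intervalIntegrable (a b : ℝ) : IntervalIntegrable (fun x => |Real.cos x|) MeasureTheory.volume a b :=
  (Real.continuous_cos.abs).intervalIntegrable a b

lemma integral_abs_cos : ∫ φ in (0:ℝ)..(2*Real.pi), |Real.cos φ| = 4 := by
  have hpi := Real.pi_pos
  have h1 : ∫ φ in (0:ℝ)..(Real.pi/2), |Real.cos φ| = 1 := by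
    rw [integral_congr (g := Real.cos) ?_]
    · rw [integral_cos]; simp
    · intro x hx
      rw [uIcc_of_le (by linarith)] at hx
      exact _root_.abs_of_nonneg (Real.cos_nonneg_of_mem_Icc ⟨by linarith [hx.1], hx.2⟩)
  have h2 : ∫ φ in (Real.pi/2)..(3*Real.pi/2), |Real.cos φ| = 2 := by
    rw [integral_congr (g := fun x => -Real.cos x) ?_]
    · rw [intervalIntegral.integral_neg, integral_cos]
      have hs : Real.sin (3*Real.pi/2) = -1 := by
        have : (3*Real.pi/2) = Real.pi/2 + Real.pi := by ring
        rw [this, Real.sin_add_pi, Real.sin_pi_div_two]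
      rw [hs, Real.sin_pi_div_two]; ring
    · intro x hx
      rw [uIcc_of_le (by linarith)] at hx
      have := Real.cos_nonpos_of_pi_div_two_le_of_le hx.1 (by linarith [hx.2])
      exact abs_of_nonpos this
  have h3 : ∫ φ in (3*Real.pi/2)..(2*Real.pi), |Real.cos φ| = 1 := by
    rw [integral_congr (g := Real.cos) ?_]
    · rw [integral_cos]
      have hs : Real.sin (3*Real.pi/2) = -1 := by
        have : (3*Real.pi/2) = Real.pi/2 + Real.pi := by ring
        rw [this, Real.sin_add_pi, Real.sin_pi_div_two]
      rw [hs, Real.sin_two_pi]; ring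
    · intro x hx
      rw [uIcc_of_le (by linarith)] at hx
      have hmem : x - 2*Real.pi ∈ Icc (-(Real.pi/2)) (Real.pi/2) :=
        ⟨by linarith [hx.1], by linarith [hx.2]⟩
      have hnn := Real.cos_nonneg_of_mem_Icc hmem
      rw [Real.cos_sub_two_pi] at hnn
      exact _root_.abs_of_nonneg hnn
  have hsplit : ∫ φ in (0:ℝ)..(2*Real.pi), |Real.cos φ|
      = (∫ φ in (0:ℝ)..(Real.pi/2), |Real.cos φ|)
        + ((∫ φ in (Real.pi/2)..(3*Real.pi/2), |Real.cos φ|)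
        + (∫ φ in (3*Real.pi/2)..(2*Real.pi), |Real.cos φ|)) := by
    rw [integral_add_adjacent_intervals (absCos_intervalIntegrable _ _) (absCos_intervalIntegrable _ _),
      integral_add_adjacent_intervals (absCos_intervalIntegrable _ _) (absCos_intervalIntegrable _ _)]
  rw [hsplit, h1, h2, h3]; norm_num

lemma periodic_abs_cos : Function.Periodic (fun x => |Real.cos x|) (2*Real.pi) := by
  intro x; simp [Real.cos_add_two_pi]

lemma integral_abs_cos_shift (α : ℝ) :
    ∫ φ in (0:ℝ)..(2*Real.pi), |Real.cos (φ - α)| = 4 := by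
  rw [intervalIntegral.integral_comp_sub_right (fun x => |Real.cos x|) α]
  have := periodic_abs_cos.intervalIntegral_add_eq (-α) 0
  simp only [zero_add] at this
  rw [show (0:ℝ) - α = -α by ring, show 2*Real.pi - α = -α + 2*Real.pi by ring, this]
  exact integral_abs_cos

lemma integral_abs_fdir (z : ℂ) :
    ∫ φ in (0:ℝ)..(2*Real.pi), |Fdir z φ| = 4 * ‖z‖ := by
  by_cases hz : z = 0
  · simp [hz, Fdir]
  · have habs : 0 < ‖z‖ := norm_pos_iff.mpr hz
    have hc : Real.cos (Complex.arg z) = z.re / ‖z‖ := Complex.cos_arg hz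
    have hs : Real.sin (Complex.arg z) = z.im / ‖z‖ := Complex.sin_arg z
    have key : ∀ φ, Fdir z φ = ‖z‖ * Real.cos (φ - Complex.arg z) := by
      intro φ
      rw [Real.cos_sub, hc, hs, Fdir]
      field_simp
    have : ∀ φ, |Fdir z φ| = ‖z‖ * |Real.cos (φ - Complex.arg z)| := by
      intro φ
      rw [key, abs_mul, _root_.abs_of_pos habs]
    rw [integral_congr (fun x _ => this x), intervalIntegral.integral_const_mul, integral_abs_cos_shift]
    ring


lemma continuous_Fdir (z : ℂ) : Continuous (fun φ => Fdir z φ) := by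
  unfold Fdir
  exact (continuous_const.mul Real.continuous_cos).add (continuous_const.mul Real.continuous_sin)

lemma integral_abs_sin : ∫ φ in (0:ℝ)..(2*Real.pi), |Real.sin φ| = 4 := by
  have h : ∀ φ : ℝ, |Real.sin φ| = |Real.cos (φ - Real.pi/2)| := by
    intro φ
    rw [Real.cos_sub, Real.cos_pi_div_two, Real.sin_pi_div_two]
    norm_num
  rw [intervalIntegral.integral_congr (fun x _ => h x)]
  exact integral_abs_cos_shift _

/-- A closed plane curve that winds once around each of the four vertices of a
square of side `2` and stays at distance `≥ 1` from all four vertices has length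
at least `2π + 8`. -/
theorem stmt16 (γ : ℝ → ℂ) (hcont : ContinuousOn γ (Icc 0 1)) (hclosed : γ 0 = γ 1)
    (hwind : ∀ i : Fin 4, WindsOnce γ (squareVertices i))
    (hdist : ∀ t ∈ Icc (0:ℝ) 1, ∀ i : Fin 4, 1 ≤ dist (γ t) (squareVertices i)) :
    ENNReal.ofReal (2 * Real.pi + 8) ≤ eVariationOn γ (Icc 0 1) := by
  by_cases hfin : eVariationOn γ (Icc 0 1) = ⊤
  · rw [hfin]; exact le_top
  have hpi := Real.pi_pos
  set L : ℝ := (eVariationOn γ (Icc 0 1)).toReal with hL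
  -- Step 1: partition sums of distances are bounded by L
  have hsum : ∀ N : ℕ, 1 ≤ N →
      ∑ k ∈ Finset.range N, dist (γ (((k:ℝ)+1)/(N:ℝ))) (γ ((k:ℝ)/(N:ℝ))) ≤ L := by
    intro N hN
    have hNpos : (0:ℝ) < N := by exact_mod_cast hN
    set u : ℕ → ℝ := fun k => (min k N : ℕ) / (N:ℝ) with hu
    have hmono : Monotone u := by
      intro a b hab
      have h : ((min a N : ℕ):ℝ) ≤ ((min b N : ℕ):ℝ) := by
        exact_mod_cast min_le_min hab le_rfl
      exact (div_le_div_iff_of_pos_right hNpos).mpr h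
    have hmem : ∀ k, u k ∈ Icc (0:ℝ) 1 := by
      intro k
      constructor
      · positivity
      · rw [div_le_one hNpos]
        exact_mod_cast Nat.cast_le.mpr (min_le_right k N)
    have hle := eVariationOn.sum_le (f := γ) (n := N) hmono hmem
    have heq : ∑ i ∈ Finset.range N, edist (γ (u (i+1))) (γ (u i))
        = ENNReal.ofReal (∑ k ∈ Finset.range N, dist (γ (((k:ℝ)+1)/(N:ℝ))) (γ ((k:ℝ)/(N:ℝ)))) := by
      rw [ENNReal.ofReal_sum_of_nonneg (fun i _ => dist_nonneg)]
      apply Finset.sum_congr rfl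
      intro k hk
      have hk' : k < N := Finset.mem_range.mp hk
      have e1 : u (k+1) = ((k:ℝ)+1)/(N:ℝ) := by
        rw [hu]; simp only
        rw [min_eq_left (by omega : k+1 ≤ N)]
        push_cast; ring
      have e2 : u k = (k:ℝ)/(N:ℝ) := by
        rw [hu]; simp only
        rw [min_eq_left (by omega : k ≤ N)]
      rw [e1, e2, edist_dist]
    rw [heq] at hle
    exact (ENNReal.ofReal_le_iff_le_toReal hfin).mp hle
  -- Step 2: for every ε > 0 the Crofton bound holds
  have key : ∀ ε : ℝ, 0 < ε → 32 + 8*Real.pi - 2*ε*(2*Real.pi) ≤ 4 * L := by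
    intro ε hε
    set U : ℕ × ℕ × ℕ → Set ℝ := fun x =>
      {φ : ℝ | 1 ≤ x.1 ∧ x.2.1 ≤ x.1 ∧ x.2.2 ≤ x.1 ∧
        2*|Real.cos φ| + 2*|Real.sin φ| + 2 - ε
          < Fdir (γ ((x.2.1:ℝ)/(x.1:ℝ))) φ - Fdir (γ ((x.2.2:ℝ)/(x.1:ℝ))) φ} with hU
    have hUopen : ∀ x, IsOpen (U x) := by
      intro x
      by_cases hP : 1 ≤ x.1 ∧ x.2.1 ≤ x.1 ∧ x.2.2 ≤ x.1
      · have hUx : U x = {φ : ℝ | 2*|Real.cos φ| + 2*|Real.sin φ| + 2 - ε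
            < Fdir (γ ((x.2.1:ℝ)/(x.1:ℝ))) φ - Fdir (γ ((x.2.2:ℝ)/(x.1:ℝ))) φ} := by
          ext φ
          simp only [hU, Set.mem_setOf_eq]
          exact ⟨fun h => h.2.2.2, fun h => ⟨hP.1, hP.2.1, hP.2.2, h⟩⟩
        rw [hUx]
        apply isOpen_lt
        · apply Continuous.sub ?_ continuous_const
          apply Continuous.add
          · apply Continuous.add
            · exact continuous_const.mul Real.continuous_cos.abs
            · exact continuous_const.mul Real.continuous_sin.abs
          · exact continuous_const
        · exact (continuous_Fdir _).sub (continuous_Fdir _)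
      · have hUx : U x = ∅ := by
          ext φ
          simp only [hU, Set.mem_setOf_eq, Set.mem_empty_iff_false, iff_false]
          intro h
          exact hP ⟨h.1, h.2.1, h.2.2.1⟩
        rw [hUx]; exact isOpen_empty
    have hcover : Icc (0:ℝ) (2*Real.pi) ⊆ ⋃ x, U x := by
      intro φ _
      obtain ⟨n, i, j, h1, h2, h3, h4⟩ := dirBound γ hcont hclosed hwind hdist φ ε hε
      exact mem_iUnion.mpr ⟨(n, i, j), ⟨h1, h2, h3, h4⟩⟩
    obtain ⟨s, hs⟩ := isCompact_Icc.elim_finite_subcover U hUopen hcover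
    set N : ℕ := ∏ x ∈ s, max 1 x.1 with hNdef
    have hN1 : 1 ≤ N := Finset.one_le_prod' (fun x _ => le_max_left 1 x.1)
    set T : ℝ → ℝ := fun φ =>
      ∑ k ∈ Finset.range N, |Fdir (γ (((k:ℝ)+1)/(N:ℝ))) φ - Fdir (γ ((k:ℝ)/(N:ℝ))) φ| with hT
    -- pointwise bound
    have hpoint : ∀ φ ∈ Icc (0:ℝ) (2*Real.pi),
        2*(2*|Real.cos φ| + 2*|Real.sin φ| + 2) - 2*ε ≤ T φ := by
      intro φ hφ
      obtain ⟨x, hxs, hxU⟩ := mem_iUnion₂.mp (hs hφ)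
      obtain ⟨hn1, hi, hj, hlt⟩ := hxU
      obtain ⟨n, i, j⟩ := x
      simp only at hn1 hi hj hlt
      have hdvd : n ∣ N := by
        have h1 : max 1 n ∣ N := Finset.dvd_prod_of_mem (fun y => max 1 y.1) hxs
        rwa [max_eq_right hn1] at h1
      obtain ⟨m, hm⟩ := hdvd
      have hm1 : 1 ≤ m := by
        rcases Nat.eq_zero_or_pos m with h | h
        · subst h; simp at hm; omega
        · exact h
      have hncast : ((n:ℝ)) ≠ 0 := Nat.cast_ne_zero.mpr (by omega)
      have hmcast : ((m:ℝ)) ≠ 0 := Nat.cast_ne_zero.mpr (by omega)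
      have hcast : ∀ a : ℕ, ((a*m : ℕ):ℝ)/((N:ℕ):ℝ) = (a:ℝ)/(n:ℝ) := by
        intro a
        rw [hm]
        push_cast
        rw [mul_div_mul_right _ _ hmcast]
      set f : ℝ → ℝ := fun x => Fdir (γ x) φ with hf
      have hf01 : f 0 = f 1 := by simp only [hf, hclosed]
      have hTf : T φ = ∑ k ∈ Finset.range N, |f (((k:ℝ)+1)/(N:ℝ)) - f ((k:ℝ)/(N:ℝ))| := rfl
      have hflt : 2*|Real.cos φ| + 2*|Real.sin φ| + 2 - ε < f ((i:ℝ)/(n:ℝ)) - f ((j:ℝ)/(n:ℝ)) := hlt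
      rcases le_total (i*m) (j*m) with hle | hle
      · have hg := gridBound f hf01 N (i*m) (j*m) hN1 hle
          (by rw [hm]; exact Nat.mul_le_mul_right _ hj)
        rw [hcast i, hcast j] at hg
        have habs : f ((i:ℝ)/(n:ℝ)) - f ((j:ℝ)/(n:ℝ))
            ≤ |f ((i:ℝ)/(n:ℝ)) - f ((j:ℝ)/(n:ℝ))| := le_abs_self _
        rw [hTf]
        linarith
      · have hg := gridBound f hf01 N (j*m) (i*m) hN1 hle
          (by rw [hm]; exact Nat.mul_le_mul_right _ hi)
        rw [hcast i, hcast j] at hg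
        rw [abs_sub_comm] at hg
        have habs : f ((i:ℝ)/(n:ℝ)) - f ((j:ℝ)/(n:ℝ))
            ≤ |f ((i:ℝ)/(n:ℝ)) - f ((j:ℝ)/(n:ℝ))| := le_abs_self _
        rw [hTf]
        linarith
    -- integrate the pointwise bound
    have hTcont : Continuous T := by
      apply continuous_finset_sum
      intro k _
      exact ((continuous_Fdir _).sub (continuous_Fdir _)).abs
    have hWcont : Continuous (fun φ => 2*(2*|Real.cos φ| + 2*|Real.sin φ| + 2) - 2*ε) := by
      apply Continuous.sub ?_ continuous_const
      apply Continuous.mul continuous_const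
      apply Continuous.add
      · apply Continuous.add
        · exact continuous_const.mul Real.continuous_cos.abs
        · exact continuous_const.mul Real.continuous_sin.abs
      · exact continuous_const
    have hint := intervalIntegral.integral_mono_on (μ := MeasureTheory.volume) (by linarith : (0:ℝ) ≤ 2*Real.pi)
      (hWcont.intervalIntegrable 0 (2*Real.pi)) (hTcont.intervalIntegrable 0 (2*Real.pi)) hpoint
    -- compute the left integral
    have hWint : ∫ φ in (0:ℝ)..(2*Real.pi), (2*(2*|Real.cos φ| + 2*|Real.sin φ| + 2) - 2*ε)
        = 32 + 8*Real.pi - 2*ε*(2*Real.pi) := by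
      have hsplit : (fun φ => 2*(2*|Real.cos φ| + 2*|Real.sin φ| + 2) - 2*ε)
          = fun φ => (4*|Real.cos φ| + 4*|Real.sin φ|) + (4 - 2*ε) := by
        funext φ; ring
      rw [hsplit]
      rw [intervalIntegral.integral_add ?h1 (intervalIntegrable_const)]
      case h1 =>
        apply Continuous.intervalIntegrable
        exact (continuous_const.mul Real.continuous_cos.abs).add
          (continuous_const.mul Real.continuous_sin.abs)
      rw [intervalIntegral.integral_add ?h2 ?h3]
      case h2 => exact (continuous_const.mul Real.continuous_cos.abs).intervalIntegrable _ _
      case h3 => exact (continuous_const.mul Real.continuous_sin.abs).intervalIntegrable _ _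
      rw [intervalIntegral.integral_const_mul, intervalIntegral.integral_const_mul,
        integral_abs_cos, integral_abs_sin, intervalIntegral.integral_const]
      simp only [smul_eq_mul]
      ring
    -- compute the right integral
    have hTint : ∫ φ in (0:ℝ)..(2*Real.pi), T φ
        = ∑ k ∈ Finset.range N, 4 * dist (γ (((k:ℝ)+1)/(N:ℝ))) (γ ((k:ℝ)/(N:ℝ))) := by
      rw [hT]
      rw [intervalIntegral.integral_finset_sum]
      · apply Finset.sum_congr rfl
        intro k _
        have heq1 : ∀ φ, |Fdir (γ (((k:ℝ)+1)/(N:ℝ))) φ - Fdir (γ ((k:ℝ)/(N:ℝ))) φ|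
            = |Fdir (γ (((k:ℝ)+1)/(N:ℝ)) - γ ((k:ℝ)/(N:ℝ))) φ| := by
          intro φ
          rw [Fdir_sub]
        rw [intervalIntegral.integral_congr (fun x _ => heq1 x), integral_abs_fdir,
          Complex.dist_eq]
      · intro k _
        exact (((continuous_Fdir _).sub (continuous_Fdir _)).abs).intervalIntegrable _ _
    rw [hWint, hTint] at hint
    have h4 : ∑ k ∈ Finset.range N, 4 * dist (γ (((k:ℝ)+1)/(N:ℝ))) (γ ((k:ℝ)/(N:ℝ)))
        = 4 * ∑ k ∈ Finset.range N, dist (γ (((k:ℝ)+1)/(N:ℝ))) (γ ((k:ℝ)/(N:ℝ))) := by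
      rw [Finset.mul_sum]
    rw [h4] at hint
    have := hsum N hN1
    linarith
  -- Step 3: conclude
  have hfinal : 2*Real.pi + 8 ≤ L := by
    by_contra hcon
    push_neg at hcon
    have hε : 0 < (32 + 8*Real.pi - 4*L) / (8*Real.pi) := by
      apply div_pos (by linarith) (by linarith)
    have := key _ hε
    have h2 : 2*((32 + 8*Real.pi - 4*L) / (8*Real.pi))*(2*Real.pi) = (32 + 8*Real.pi - 4*L)/2 := by
      field_simp
      ring
    rw [h2] at this
    linarith
  calc ENNReal.ofReal (2 * Real.pi + 8) ≤ ENNReal.ofReal L :=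
        ENNReal.ofReal_le_ofReal (by linarith)
    _ = eVariationOn γ (Icc 0 1) := ENNReal.ofReal_toReal hfin
end

section
/- Any continuous path in the space of 4-tuples of points on S¹ that starts at a configuration with dihedral order (1,2,3,4) and ends at one with dihedral order (1,3,2,4) must pass through a non-injective configuration (two of the four points collide). -/
open Set Metric

/-- The circle `S¹`, as the unit sphere in `ℝ² = ℂ`. -/
abbrev S1 : Type := Metric.sphere (0 : ℂ) 1

/-- `a, b, c` occur counterclockwise (positive orientation determinant); for three
distinct points of the circle this says that `a, b, c` are in counterclockwise
cyclic order around `S¹`. -/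
def Ccw (a b c : ℂ) : Prop := 0 < ((starRingEnd ℂ) (b - a) * (c - a)).im

/-- The 4-point configuration `x` induces the dihedral order `(1,2,3,4)`:
traveling around the circle the labels read `1,2,3,4` up to cyclic rotation and
reversal. -/
def DihOrder1234 (x : Fin 4 → S1) : Prop :=
  (Ccw (x 0) (x 1) (x 2) ∧ Ccw (x 0) (x 2) (x 3)) ∨
  (Ccw (x 0) (x 3) (x 2) ∧ Ccw (x 0) (x 2) (x 1))

/-- The 4-point configuration `x` induces the dihedral order `(1,3,2,4)`. -/
def DihOrder1324 (x : Fin 4 → S1) : Prop :=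
  (Ccw (x 0) (x 2) (x 1) ∧ Ccw (x 0) (x 1) (x 3)) ∨
  (Ccw (x 0) (x 3) (x 1) ∧ Ccw (x 0) (x 1) (x 2))

/-! ### Auxiliary lemmas -/

open Complex in
/-- The orientation determinant of the triple `(a,b,c)`. -/
noncomputable def dd (a b c : ℂ) : ℝ := ((starRingEnd ℂ) (b - a) * (c - a)).im

lemma ccw_iff_dd (a b c : ℂ) : Ccw a b c ↔ 0 < dd a b c := Iff.rfl

open Complex in
lemma dd_key (a b c : ℂ) (ha : normSq a = 1) (hb : normSq b = 1) (hc : normSq c = 1) :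
    2 * dd a b c =
      normSq (b - a) * (a * (starRingEnd ℂ) (c - a)).im
      - normSq (c - a) * (a * (starRingEnd ℂ) (b - a)).im := by
  simp only [dd, Complex.normSq_apply, Complex.mul_im, Complex.mul_re, Complex.conj_re,
    Complex.conj_im, Complex.sub_re, Complex.sub_im] at *
  linear_combination (2*b.im*c.re - 2*b.re*c.im - a.im*c.re + a.im*b.re + a.re*c.im - a.re*b.im) * ha
    + (a.re*c.im - a.im*c.re) * hb + (a.im*b.re - a.re*b.im) * hc

lemma dd_antisymm (a b c : ℂ) : dd a b c = - dd a c b := by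
  simp only [dd, Complex.mul_im, Complex.conj_re, Complex.conj_im, Complex.sub_re,
    Complex.sub_im]
  ring

open Complex in
lemma div_im' (z w : ℂ) : (z / w).im = (z * (starRingEnd ℂ) w).im / normSq w := by
  simp only [Complex.div_im, Complex.mul_im, Complex.conj_re, Complex.conj_im]
  ring

open Complex in
/-- On the unit circle, `dd a b c > 0` iff `Im (a/(b-a)) < Im (a/(c-a))`. -/
lemma dd_pos_iff (a b c : ℂ) (ha : normSq a = 1) (hb : normSq b = 1) (hc : normSq c = 1)
    (hba : b ≠ a) (hca : c ≠ a) :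
    0 < dd a b c ↔ (a / (b - a)).im < (a / (c - a)).im := by
  have hNb : 0 < normSq (b - a) := normSq_pos.2 (sub_ne_zero.2 hba)
  have hNc : 0 < normSq (c - a) := normSq_pos.2 (sub_ne_zero.2 hca)
  rw [div_im', div_im', div_lt_div_iff₀ hNb hNc]
  constructor
  · intro h
    nlinarith [dd_key a b c ha hb hc]
  · intro h
    nlinarith [dd_key a b c ha hb hc]

open Complex in
lemma re_half (a b : ℂ) (ha : normSq a = 1) (hb : normSq b = 1) (hba : b ≠ a) :
    (a / (b - a)).re = -(1/2) := by
  have hNb : 0 < normSq (b - a) := normSq_pos.2 (sub_ne_zero.2 hba)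
  rw [Complex.div_re, ← add_div, div_eq_iff hNb.ne']
  simp only [Complex.normSq_apply, Complex.sub_re, Complex.sub_im] at *
  linear_combination (-(1:ℝ)/2) * ha + ((1:ℝ)/2) * hb

open Complex in
lemma f_inj (a b c : ℂ) (ha : normSq a = 1) (hb : normSq b = 1) (hc : normSq c = 1)
    (hba : b ≠ a) (hca : c ≠ a)
    (h : (a / (b - a)).im = (a / (c - a)).im) : b = c := by
  have ha0 : a ≠ 0 := by intro h0; rw [h0] at ha; simp [normSq] at ha
  have h1 : a / (b - a) = a / (c - a) := by
    apply Complex.ext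
    · rw [re_half a b ha hb hba, re_half a c ha hc hca]
    · exact h
  have h2 : b - a = c - a := by
    rw [div_eq_div_iff (sub_ne_zero.2 hba) (sub_ne_zero.2 hca)] at h1
    have := mul_left_cancel₀ ha0 h1
    linear_combination -this
  exact sub_left_injective h2

open Complex in
/-- Transitivity of cyclic order on the circle. -/
lemma dd_trans (a b c d : ℂ) (ha : normSq a = 1) (hb : normSq b = 1) (hc : normSq c = 1)
    (hd : normSq d = 1) (hba : b ≠ a) (hca : c ≠ a) (hda : d ≠ a)
    (h1 : 0 < dd a b c) (h2 : 0 < dd a c d) : 0 < dd a b d := by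
  rw [dd_pos_iff a b c ha hb hc hba hca] at h1
  rw [dd_pos_iff a c d ha hc hd hca hda] at h2
  rw [dd_pos_iff a b d ha hb hd hba hda]
  linarith

open Complex in
/-- Nondegeneracy: for pairwise distinct points of the circle the determinant is nonzero.
(Stated contrapositively.) -/
lemma dd_eq_zero (a b c : ℂ) (ha : normSq a = 1) (hb : normSq b = 1) (hc : normSq c = 1)
    (h : dd a b c = 0) : a = b ∨ a = c ∨ b = c := by
  by_cases hba : b = a
  · exact Or.inl hba.symm
  by_cases hca : c = a
  · exact Or.inr (Or.inl hca.symm)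
  refine Or.inr (Or.inr ?_)
  have h1 : ¬ (a / (b - a)).im < (a / (c - a)).im := by
    rw [← dd_pos_iff a b c ha hb hc hba hca]; rw [h]; exact lt_irrefl 0
  have h2 : ¬ (a / (c - a)).im < (a / (b - a)).im := by
    rw [← dd_pos_iff a c b ha hc hb hca hba]
    rw [dd_antisymm a c b, h]; simp
  exact f_inj a b c ha hb hc hba hca (le_antisymm (not_lt.1 h2) (not_lt.1 h1))

/-- Any continuous path in the space of 4-tuples of points on `S¹` starting at an
injective configuration with dihedral order `(1,2,3,4)` and ending at an injective
configuration with dihedral order `(1,3,2,4)` must pass through a non-injective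
configuration: at some time two of the four points collide. -/
theorem stmt19 (H : unitInterval → Fin 4 → S1) (hH : Continuous H)
    (h0inj : Function.Injective (H 0)) (h1inj : Function.Injective (H 1))
    (h0 : DihOrder1234 (H 0)) (h1 : DihOrder1324 (H 1)) :
    ∃ t : unitInterval, ∃ i j : Fin 4, i ≠ j ∧ H t i = H t j := by
  classical
  set x : unitInterval → Fin 4 → ℂ := fun t i => ((H t i : ℂ)) with hxdef
  have hx : ∀ t i, Complex.normSq (x t i) = 1 := by
    intro t i
    have : ‖x t i‖ = 1 := mem_sphere_zero_iff_norm.1 (H t i).2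
    rw [Complex.normSq_eq_norm_sq, this]; norm_num
  have hxc : ∀ i, Continuous fun t => x t i := fun i =>
    continuous_subtype_val.comp ((continuous_apply i).comp hH)
  -- distinctness at endpoints
  have hne : ∀ (t : unitInterval), Function.Injective (H t) →
      ∀ i j : Fin 4, i ≠ j → x t i ≠ x t j := by
    intro t hinj i j hij h
    exact hij (hinj (Subtype.ext h))
  -- the continuous sign function
  set u : unitInterval → ℝ :=
    fun t => dd (x t 0) (x t 1) (x t 2) * dd (x t 0) (x t 1) (x t 3) with hudef
  have hu : Continuous u := by
    simp only [hudef, dd]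
    fun_prop
  have hu0 : 0 < u 0 := by
    have n10 := hne 0 h0inj 1 0 (by decide)
    have n20 := hne 0 h0inj 2 0 (by decide)
    have n30 := hne 0 h0inj 3 0 (by decide)
    rcases h0 with ⟨h12, h23⟩ | ⟨h32, h21⟩
    · have h12' : 0 < dd (x 0 0) (x 0 1) (x 0 2) := h12
      have h23' : 0 < dd (x 0 0) (x 0 2) (x 0 3) := h23
      have h13 : 0 < dd (x 0 0) (x 0 1) (x 0 3) :=
        dd_trans _ _ _ _ (hx 0 0) (hx 0 1) (hx 0 2) (hx 0 3) n10 n20 n30 h12' h23'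
      exact mul_pos h12' h13
    · have h32' : 0 < dd (x 0 0) (x 0 3) (x 0 2) := h32
      have h21' : 0 < dd (x 0 0) (x 0 2) (x 0 1) := h21
      have h31 : 0 < dd (x 0 0) (x 0 3) (x 0 1) :=
        dd_trans _ _ _ _ (hx 0 0) (hx 0 3) (hx 0 2) (hx 0 1) n30 n20 n10 h32' h21'
      have e1 : dd (x 0 0) (x 0 1) (x 0 2) < 0 := by
        rw [dd_antisymm]; linarith
      have e2 : dd (x 0 0) (x 0 1) (x 0 3) < 0 := by
        rw [dd_antisymm]; linarith
      exact mul_pos_of_neg_of_neg e1 e2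
  have hu1 : u 1 < 0 := by
    rcases h1 with ⟨h21, h13⟩ | ⟨h31, h12⟩
    · have h21' : 0 < dd (x 1 0) (x 1 2) (x 1 1) := h21
      have h13' : 0 < dd (x 1 0) (x 1 1) (x 1 3) := h13
      have e1 : dd (x 1 0) (x 1 1) (x 1 2) < 0 := by
        rw [dd_antisymm]; linarith
      exact mul_neg_of_neg_of_pos e1 h13'
    · have h31' : 0 < dd (x 1 0) (x 1 3) (x 1 1) := h31
      have h12' : 0 < dd (x 1 0) (x 1 1) (x 1 2) := h12
      have e2 : dd (x 1 0) (x 1 1) (x 1 3) < 0 := by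
        rw [dd_antisymm]; linarith
      exact mul_neg_of_pos_of_neg h12' e2
  -- intermediate value theorem
  have hmem : (0 : ℝ) ∈ Icc (u 1) (u 0) := ⟨le_of_lt hu1, le_of_lt hu0⟩
  obtain ⟨t, ht⟩ := intermediate_value_univ (1 : unitInterval) 0 hu hmem
  rcases mul_eq_zero.1 ht with h | h
  · rcases dd_eq_zero _ _ _ (hx t 0) (hx t 1) (hx t 2) h with h' | h' | h'
    · exact ⟨t, 0, 1, by decide, Subtype.ext h'⟩
    · exact ⟨t, 0, 2, by decide, Subtype.ext h'⟩
    · exact ⟨t, 1, 2, by decide, Subtype.ext h'⟩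
  · rcases dd_eq_zero _ _ _ (hx t 0) (hx t 1) (hx t 3) h with h' | h' | h'
    · exact ⟨t, 0, 1, by decide, Subtype.ext h'⟩
    · exact ⟨t, 0, 3, by decide, Subtype.ext h'⟩
    · exact ⟨t, 1, 3, by decide, Subtype.ext h'⟩
end
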